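/- Let X be a nontrivial complex Banach space and G ⊆ X a bounded balanced domain. For every r₀ with 1/3 < r₀ < 1 there exist a holomorphic function f : G → ℂ with values in {z ∈ ℂ : |z| > 1} (with power series expansion f(x) = f(0) + Σ_{m≥1} (1/m!) D^m f(0)(x^m) at 0) and a point x ∈ r₀·G such that λ( Σ_{m≥0} |(1/m!) D^m f(0)(x^m)| , |f(0)| ) > λ( |f(0)|, 1 ), where λ(a,b) = |a − b| / (√(1+|a|²)·√(1+|b|²)). Hence the constant 1/3 in the spherical Bohr inequality for H(G, {|z| > 1}) is best possible. -/

import Mathlib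

open scoped Pointwise
open scoped NNReal

/-- The spherical (chordal) distance between two (real) numbers, viewed as points
of the extended complex plane: `λ(a, b) = |a - b| / (√(1 + a²)·√(1 + b²))`. -/
noncomputable def sphericalDist (a b : ℝ) : ℝ :=
  |a - b| / (Real.sqrt (1 + a ^ 2) * Real.sqrt (1 + b ^ 2))

/-- Coefficients of the extremal function `z ↦ (1 - a z)/(a - z)`. -/
noncomputable def bohrCoeff (a : ℝ) (m : ℕ) : ℝ :=
  (1 - a ^ 2) / a ^ (m + 1) + if m = 0 then a else 0

lemma bohrCoeff_nonneg {a : ℝ} (ha0 : 0 < a) (ha1 : a < 1) (m : ℕ) :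
    0 ≤ bohrCoeff a m := by
  have h1 : (0:ℝ) < 1 - a ^ 2 := by nlinarith
  have h2 : (0:ℝ) < a ^ (m + 1) := pow_pos ha0 _
  unfold bohrCoeff
  positivity

lemma bohrCoeff_hasSum_complex {a : ℝ} (ha0 : 0 < a) (ha1 : a < 1) {z : ℂ}
    (hz : ‖z‖ < a) :
    HasSum (fun m : ℕ => ((bohrCoeff a m : ℝ) : ℂ) * z ^ m)
      ((1 - (a : ℂ) * z) / ((a : ℂ) - z)) := by
  have haC : ((a : ℂ)) ≠ 0 := by
    simpa using ha0.ne'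
  have hzne : (a : ℂ) - z ≠ 0 := by
    refine sub_ne_zero.mpr fun h => ?_
    rw [← h] at hz
    simp [Complex.norm_real, abs_of_pos ha0] at hz
  have hza : ‖z / (a : ℂ)‖ < 1 := by
    rw [norm_div]
    have : ‖(a : ℂ)‖ = a := by simp [Complex.norm_real, abs_of_pos ha0]
    rw [this, div_lt_one ha0]
    exact hz
  have h1 : HasSum (fun m : ℕ => (((1 - a ^ 2 : ℝ) : ℂ) / a) * (z / a) ^ m)
      ((((1 - a ^ 2 : ℝ) : ℂ) / a) * (1 - z / a)⁻¹) :=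
    (hasSum_geometric_of_norm_lt_one hza).mul_left _
  have h2 : HasSum (fun m : ℕ => (if m = 0 then ((a : ℝ) : ℂ) else 0) * z ^ m)
      ((a : ℂ)) := by
    have := hasSum_ite_eq (0 : ℕ) ((a : ℝ) : ℂ)
    refine this.congr_fun fun m => ?_
    by_cases h : m = 0 <;> simp [h]
  have h3 := h1.add h2
  have hfun : ∀ m : ℕ, (((1 - a ^ 2 : ℝ) : ℂ) / a) * (z / a) ^ m
      + (if m = 0 then ((a : ℝ) : ℂ) else 0) * z ^ m
      = ((bohrCoeff a m : ℝ) : ℂ) * z ^ m := by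
    intro m
    have hpow : ((a : ℂ)) ^ (m + 1) ≠ 0 := pow_ne_zero _ haC
    unfold bohrCoeff
    push_cast
    by_cases h : m = 0
    · subst h
      simp
    · simp only [if_neg h, Complex.ofReal_zero, zero_mul, add_zero]
      rw [div_pow, pow_succ]
      ring
  have h4 := h3.congr_fun (fun m => (hfun m).symm)
  convert h4 using 1
  have h1az : (1 : ℂ) - z / a ≠ 0 := by
    have e : (1 : ℂ) - z / (a : ℂ) = ((a : ℂ) - z) / a := by field_simp
    rw [e]
    exact div_ne_zero hzne haC
  field_simp
  push_cast
  ring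

lemma bohrCoeff_hasSum_real {a : ℝ} (ha0 : 0 < a) (ha1 : a < 1) {t : ℝ}
    (ht0 : 0 ≤ t) (ht : t < a) :
    HasSum (fun m : ℕ => bohrCoeff a m * t ^ m) ((1 - a * t) / (a - t)) := by
  have haz : a - t ≠ 0 := by linarith
  have hza : ‖t / a‖ < 1 := by
    rw [Real.norm_eq_abs, abs_of_nonneg (div_nonneg ht0 ha0.le), div_lt_one ha0]
    exact ht
  have h1 : HasSum (fun m : ℕ => ((1 - a ^ 2) / a) * (t / a) ^ m)
      (((1 - a ^ 2) / a) * (1 - t / a)⁻¹) :=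
    (hasSum_geometric_of_norm_lt_one hza).mul_left _
  have h2 : HasSum (fun m : ℕ => (if m = 0 then a else 0) * t ^ m) a := by
    have := hasSum_ite_eq (0 : ℕ) a
    refine this.congr_fun fun m => ?_
    by_cases h : m = 0 <;> simp [h]
  have h3 := h1.add h2
  have hfun : ∀ m : ℕ, ((1 - a ^ 2) / a) * (t / a) ^ m
      + (if m = 0 then a else 0) * t ^ m = bohrCoeff a m * t ^ m := by
    intro m
    have hpow : a ^ (m + 1) ≠ 0 := pow_ne_zero _ ha0.ne'
    unfold bohrCoeff
    by_cases h : m = 0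
    · subst h
      simp
    · simp only [if_neg h, zero_mul, add_zero]
      rw [div_pow, pow_succ]
      ring
  have h4 := h3.congr_fun (fun m => (hfun m).symm)
  convert h4 using 1
  have h1az : (1 : ℝ) - t / a ≠ 0 := by
    have : t / a < 1 := (div_lt_one ha0).mpr ht
    linarith
  field_simp
  ring

lemma bohr_key_ineq {d t : ℝ} (hd0 : 0 < d) (hd1 : d ≤ 1 / 100)
    (ht0 : 1 / 3 + d / 2 ≤ t) (ht1 : t ≤ 1 - d / 2) :
    sphericalDist (1 / (1 - d / 4)) 1 <
      sphericalDist ((1 - (1 - d / 4) * t) / ((1 - d / 4) - t)) (1 / (1 - d / 4)) := by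
  set a : ℝ := 1 - d / 4 with ha_def
  have ha0 : 0 < a := by simp only [ha_def]; linarith
  have ha1 : a < 1 := by simp only [ha_def]; linarith
  have hat : 0 < a - t := by simp only [ha_def]; linarith
  set b : ℝ := 1 / a with hb_def
  set S : ℝ := (1 - a * t) / (a - t) with hS_def
  have hb1 : 1 < b := by
    rw [hb_def, lt_div_iff₀ ha0]; linarith
  have ht0' : 0 < t := by linarith
  have h1a : 0 < 1 - a := by rw [ha_def]; linarith
  have h1a' : 0 < 1 + a := by rw [ha_def]; linarith
  have hSb : b < S := by
    rw [hS_def, hb_def, div_lt_div_iff₀ ha0 hat]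
    nlinarith [mul_pos ht0' (mul_pos h1a h1a')]
  have key : (a - t) ^ 2 + (1 - a * t) ^ 2 < 2 * (1 + a) ^ 2 * t ^ 2 := by
    simp only [ha_def]
    nlinarith [sq_nonneg (t - 1/3), sq_nonneg d, sq_nonneg (d*t)]
  -- reduce to squared inequality
  have hS1 : 0 < Real.sqrt (1 + S ^ 2) := Real.sqrt_pos.mpr (by positivity)
  have hb1' : 0 < Real.sqrt (1 + b ^ 2) := Real.sqrt_pos.mpr (by positivity)
  have h2' : 0 < Real.sqrt (1 + 1 ^ 2) := Real.sqrt_pos.mpr (by norm_num)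
  unfold sphericalDist
  rw [abs_of_pos (by linarith), abs_of_pos (by linarith)]
  rw [div_lt_div_iff₀ (by positivity) (by positivity)]
  -- goal : (b - 1) * (sqrt (1+S^2) * sqrt (1+b^2)) < (S - b) * (sqrt (1+b^2) * sqrt (1+1^2))
  have main : (b - 1) * Real.sqrt (1 + S ^ 2) < (S - b) * Real.sqrt (1 + 1 ^ 2) := by
    have hL : 0 ≤ (b - 1) * Real.sqrt (1 + S ^ 2) := mul_nonneg (by linarith) hS1.le
    have hsq : ((b - 1) * Real.sqrt (1 + S ^ 2)) ^ 2 <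
        ((S - b) * Real.sqrt (1 + 1 ^ 2)) ^ 2 := by
      rw [mul_pow, mul_pow, Real.sq_sqrt (by positivity), Real.sq_sqrt (by norm_num)]
      -- (b-1)^2 * (1+S^2) < (S-b)^2 * 2
      have e1 : b - 1 = (1 - a) / a := by
        rw [hb_def]; field_simp
      have e2 : S - b = ((1 - a ^ 2) * t) / (a * (a - t)) := by
        rw [hS_def, hb_def]; field_simp; ring
      have e3 : 1 + S ^ 2 = ((a - t) ^ 2 + (1 - a * t) ^ 2) / (a - t) ^ 2 := by
        rw [hS_def]; field_simp
      rw [e1, e2, e3, div_pow, div_pow, div_mul_div_comm, div_mul_eq_mul_div,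
        div_lt_div_iff₀ (by positivity) (by positivity)]
      have hmul := mul_lt_mul_of_pos_left key
        (show (0:ℝ) < (1 - a) ^ 2 * (a ^ 2 * (a - t) ^ 2) by positivity)
      nlinarith [hmul]
    exact lt_of_pow_lt_pow_left₀ 2 (mul_nonneg (by linarith) h2'.le) hsq
  calc (b - 1) * (Real.sqrt (1 + S ^ 2) * Real.sqrt (1 + b ^ 2))
      = ((b - 1) * Real.sqrt (1 + S ^ 2)) * Real.sqrt (1 + b ^ 2) := by ring
    _ < ((S - b) * Real.sqrt (1 + 1 ^ 2)) * Real.sqrt (1 + b ^ 2) := by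
        exact mul_lt_mul_of_pos_right main hb1'
    _ = (S - b) * (Real.sqrt (1 + b ^ 2) * Real.sqrt (1 + 1 ^ 2)) := by ring

set_option maxHeartbeats 3000000 in
theorem bohr_exteriorDisk_sharp {X : Type*} [NormedAddCommGroup X] [NormedSpace ℂ X]
    [CompleteSpace X] [Nontrivial X]
    (G : Set X) (hGopen : IsOpen G) (hGconn : IsConnected G)
    (hGbdd : Bornology.IsBounded G)
    (hGbal : ∀ z : ℂ, ‖z‖ ≤ 1 → z • G ⊆ G)
    (r₀ : ℝ) (hr₀ : 1 / 3 < r₀) (hr₀' : r₀ < 1) :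
    ∃ (f : X → ℂ) (p : FormalMultilinearSeries ℂ X ℂ),
      DifferentiableOn ℂ f G ∧ Set.MapsTo f G {z : ℂ | 1 < ‖z‖} ∧
      HasFPowerSeriesAt f p 0 ∧
      ∃ x ∈ (r₀ : ℂ) • G,
        Summable (fun m : ℕ => ‖p m (fun _ => x)‖) ∧
        sphericalDist ‖f 0‖ 1 <
          sphericalDist (∑' m : ℕ, ‖p m (fun _ => x)‖) ‖f 0‖ := by
  classical
  -- Basic facts about `G`
  obtain ⟨Cb, hCb⟩ := isBounded_iff_forall_norm_le.mp hGbdd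
  have hGne : G.Nonempty := hGconn.nonempty
  have h0G : (0 : X) ∈ G := by
    obtain ⟨y, hy⟩ := hGne
    have h := hGbal 0 (by norm_num) ⟨y, hy, rfl⟩
    simpa using h
  set M : ℝ := sSup ((fun y => ‖y‖) '' G) with hM_def
  have hbddA : BddAbove ((fun y => ‖y‖) '' G) :=
    ⟨Cb, by rintro _ ⟨y, hy, rfl⟩; exact hCb y hy⟩
  have hMle : ∀ y ∈ G, ‖y‖ ≤ M := fun y hy => le_csSup hbddA ⟨y, hy, rfl⟩
  have hM0 : 0 < M := by
    obtain ⟨ε, hε, hball⟩ := Metric.isOpen_iff.mp hGopen 0 h0G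
    obtain ⟨v, hv⟩ := exists_ne (0 : X)
    have hvn : 0 < ‖v‖ := norm_pos_iff.mpr hv
    set w : X := ((↑(ε / (2 * ‖v‖)) : ℂ)) • v with hw_def
    have hwnorm : ‖w‖ = ε / 2 := by
      rw [hw_def, norm_smul]
      have : ‖((↑(ε / (2 * ‖v‖)) : ℂ))‖ = ε / (2 * ‖v‖) := by
        rw [Complex.norm_real, Real.norm_eq_abs, abs_of_pos (by positivity)]
      rw [this]
      field_simp
    have hwG : w ∈ G := by
      apply hball
      rw [Metric.mem_ball, dist_zero_right, hwnorm]
      linarith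
    calc 0 < ε / 2 := by linarith
      _ = ‖w‖ := hwnorm.symm
      _ ≤ M := hMle w hwG
  clear_value M
  -- Parameters
  set d : ℝ := min (r₀ - 1 / 3) (1 / 100) with hd_def
  have hd0 : 0 < d := lt_min (by linarith) (by norm_num)
  have hd1 : d ≤ 1 / 100 := min_le_right _ _
  have hdr : d ≤ r₀ - 1 / 3 := min_le_left _ _
  clear_value d
  set a : ℝ := 1 - d / 4 with ha_def
  set a' : ℝ := 1 - d / 2 with ha'_def
  have ha0 : 0 < a := by rw [ha_def]; linarith
  have ha1 : a < 1 := by rw [ha_def]; linarith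
  have ha'0 : 0 < a' := by rw [ha'_def]; linarith
  have ha'a : a' < a := by rw [ha'_def, ha_def]; linarith
  clear_value a a'
  -- choose a point of almost maximal norm
  obtain ⟨nx, hnxmem, hnx⟩ := exists_lt_of_lt_csSup (hGne.image (fun y => ‖y‖))
    (show a' * M < sSup ((fun y : X => ‖y‖) '' G) from hM_def ▸ (by nlinarith))
  obtain ⟨x₀, hx₀G, hx₀n⟩ := hnxmem
  rw [← hx₀n] at hnx
  have hnx' : a' * M < ‖x₀‖ := hnx
  have hx₀ne : x₀ ≠ 0 := by
    intro h
    rw [h, norm_zero] at hnx'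
    nlinarith
  -- the dual functional
  obtain ⟨g, hg1, hgx⟩ := exists_dual_vector ℂ x₀ (norm_ne_zero_iff.mpr hx₀ne)
  have hgx' : g x₀ = ((‖x₀‖ : ℝ) : ℂ) := hgx
  set L : X →L[ℂ] ℂ := ((↑(a' / M) : ℂ)) • g with hL_def
  have hLy : ∀ y : X, ‖L y‖ ≤ a' / M * ‖y‖ := by
    intro y
    rw [hL_def]
    calc ‖(((↑(a' / M) : ℂ)) • g) y‖ = ‖((↑(a' / M) : ℂ))‖ * ‖g y‖ := by
          rw [ContinuousLinearMap.smul_apply, norm_smul]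
      _ = a' / M * ‖g y‖ := by
          rw [Complex.norm_real, Real.norm_eq_abs, abs_of_pos (by positivity)]
      _ ≤ a' / M * (‖g‖ * ‖y‖) := by
          exact mul_le_mul_of_nonneg_left (g.le_opNorm y) (by positivity)
      _ = a' / M * ‖y‖ := by rw [hg1, one_mul]
  have hLG : ∀ y ∈ G, ‖L y‖ ≤ a' := by
    intro y hy
    calc ‖L y‖ ≤ a' / M * ‖y‖ := hLy y
      _ ≤ a' / M * M := mul_le_mul_of_nonneg_left (hMle y hy) (by positivity)
      _ = a' := by field_simp
  -- the function and its power series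
  set f : X → ℂ := fun y => (1 - (a : ℂ) * L y) / ((a : ℂ) - L y) with hf_def
  set p : FormalMultilinearSeries ℂ X ℂ := fun m =>
    ((bohrCoeff a m : ℝ) : ℂ) •
      (ContinuousMultilinearMap.mkPiAlgebraFin ℂ m ℂ).compContinuousLinearMap
        (fun _ => L) with hp_def
  have hpapp : ∀ (m : ℕ) (v : Fin m → X),
      p m v = ((bohrCoeff a m : ℝ) : ℂ) * ∏ i, L (v i) := by
    intro m v
    rw [hp_def]
    simp [ContinuousMultilinearMap.compContinuousLinearMap_apply,
      ContinuousMultilinearMap.mkPiAlgebraFin_apply, List.prod_ofFn]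
  have hpconst : ∀ (m : ℕ) (y : X),
      (p m fun _ => y) = ((bohrCoeff a m : ℝ) : ℂ) * L y ^ m := by
    intro m y
    rw [hpapp m (fun _ => y)]
    simp [Finset.prod_const]
  clear_value L f p
  have hden : ∀ w : ℂ, ‖w‖ < a → (a : ℂ) - w ≠ 0 := by
    intro w hw
    refine sub_ne_zero.mpr fun h => ?_
    rw [← h, Complex.norm_real, Real.norm_eq_abs, abs_of_pos ha0] at hw
    exact lt_irrefl _ hw
  -- differentiability
  have hdiff : DifferentiableOn ℂ f G := by
    rw [hf_def]
    have h1 : DifferentiableOn ℂ (fun y : X => 1 - (a : ℂ) * L y) G :=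
      ((differentiable_const _).sub
        ((differentiable_const _).mul L.differentiable)).differentiableOn
    have h2 : DifferentiableOn ℂ (fun y : X => ((a : ℂ) - L y)⁻¹) G :=
      (((differentiable_const _).sub L.differentiable).differentiableOn).inv
        (fun y hy => hden _ (lt_of_le_of_lt (hLG y hy) ha'a))
    simp only [div_eq_mul_inv]
    exact h1.mul h2
  -- maps into the exterior of the closed unit disk
  have ha'1 : a' < 1 := by rw [ha'_def]; linarith
  have hA2 : (0:ℝ) < 1 - a ^ 2 := by nlinarith
  have hA'2 : (0:ℝ) < 1 - a' ^ 2 := by nlinarith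
  have hmaps : Set.MapsTo f G {z : ℂ | 1 < ‖z‖} := by
    intro y hy
    have hw : ‖L y‖ ≤ a' := hLG y hy
    have hwa : ‖L y‖ < a := lt_of_le_of_lt hw ha'a
    have hne := hden _ hwa
    have hre_im : (L y).re ^ 2 + (L y).im ^ 2 ≤ a' ^ 2 := by
      have h2 : Complex.normSq (L y) ≤ a' ^ 2 := by
        rw [← Complex.sq_norm]
        exact pow_le_pow_left₀ (norm_nonneg _) hw 2
      simpa [Complex.normSq_apply, sq] using h2
    have habs : ‖(a : ℂ) - L y‖ < ‖1 - (a : ℂ) * L y‖ := by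
      rw [Complex.norm_def, Complex.norm_def]
      apply Real.sqrt_lt_sqrt (Complex.normSq_nonneg _)
      simp only [Complex.normSq_apply, Complex.sub_re, Complex.sub_im, Complex.mul_re,
        Complex.mul_im, Complex.ofReal_re, Complex.ofReal_im, Complex.one_re, Complex.one_im]
      nlinarith [sq_nonneg (L y).re, sq_nonneg (L y).im, mul_pos hA2 hA'2, hre_im, hA2]
    show 1 < ‖f y‖
    rw [hf_def]
    simp only [norm_div]
    rw [lt_div_iff₀ (norm_pos_iff.mpr hne), one_mul]
    exact habs
  -- the power series expansion at the origin
  have hps : HasFPowerSeriesAt f p 0 := by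
    refine ⟨ENNReal.ofReal (M / 2), ?_, ENNReal.ofReal_pos.mpr (by linarith), ?_⟩
    · -- radius bound
      have : ENNReal.ofReal (M / 2) = (Real.toNNReal (M / 2) : ENNReal) := rfl
      rw [this]
      apply FormalMultilinearSeries.le_radius_of_bound _ (1 / a + 1)
      intro n
      have hcoe : ((Real.toNNReal (M / 2) : ℝ≥0) : ℝ) = M / 2 :=
        Real.coe_toNNReal _ (by linarith)
      rw [hcoe]
      have hbnd : ‖p n‖ ≤ bohrCoeff a n * (a' / M) ^ n := by
        apply ContinuousMultilinearMap.opNorm_le_bound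
        · have := bohrCoeff_nonneg ha0 ha1 n
          positivity
        · intro v
          rw [hpapp n v, norm_mul]
          have h1 : ‖((bohrCoeff a n : ℝ) : ℂ)‖ = bohrCoeff a n := by
            rw [Complex.norm_real, Real.norm_eq_abs, abs_of_nonneg (bohrCoeff_nonneg ha0 ha1 n)]
          rw [h1, norm_prod]
          rw [mul_assoc]
          apply mul_le_mul_of_nonneg_left _ (bohrCoeff_nonneg ha0 ha1 n)
          calc ∏ i, ‖L (v i)‖ ≤ ∏ i, (a' / M * ‖v i‖) :=
                Finset.prod_le_prod (fun i _ => norm_nonneg _) (fun i _ => hLy (v i))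
            _ = (a' / M) ^ n * ∏ i, ‖v i‖ := by
                rw [Finset.prod_mul_distrib, Finset.prod_const, Finset.card_univ,
                  Fintype.card_fin]
      calc ‖p n‖ * (M / 2) ^ n ≤ bohrCoeff a n * (a' / M) ^ n * (M / 2) ^ n := by
            apply mul_le_mul_of_nonneg_right hbnd (by positivity)
        _ = bohrCoeff a n * (a' / 2) ^ n := by
            rw [mul_assoc, ← mul_pow]
            congr 2
            field_simp
        _ ≤ 1 / a + 1 := by
            unfold bohrCoeff
            rw [add_mul]
            have hterm1 : (1 - a ^ 2) / a ^ (n + 1) * (a' / 2) ^ n ≤ 1 / a := by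
              have he : (1 - a ^ 2) / a ^ (n + 1) * (a' / 2) ^ n
                  = (1 - a ^ 2) / a * (a' / (2 * a)) ^ n := by
                rw [pow_succ]
                ring
              rw [he]
              have hle1 : (a' / (2 * a)) ^ n ≤ 1 := by
                apply pow_le_one₀ (by positivity)
                rw [div_le_one (by positivity)]
                rw [ha'_def, ha_def]
                linarith
              calc (1 - a ^ 2) / a * (a' / (2 * a)) ^ n ≤ (1 - a ^ 2) / a * 1 := by
                    apply mul_le_mul_of_nonneg_left hle1 (by positivity)
                _ ≤ 1 / a := by
                    rw [mul_one]
                    exact (div_le_div_iff_of_pos_right ha0).mpr (by nlinarith)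
            have hterm2 : (if n = 0 then a else 0) * (a' / 2) ^ n ≤ 1 := by
              by_cases h : n = 0
              · subst h; simp; linarith
              · rw [if_neg h, zero_mul]; norm_num
            linarith
    · -- the sum of the series
      intro y hy
      rw [EMetric.mem_ball, edist_dist, dist_zero_right] at hy
      have hy' : ‖y‖ < M / 2 := by
        rw [ENNReal.ofReal_lt_ofReal_iff (by linarith)] at hy
        exact hy
      have hLy' : ‖L y‖ < a := by
        calc ‖L y‖ ≤ a' / M * ‖y‖ := hLy y
          _ < a' / M * (M / 2) := by
              apply mul_lt_mul_of_pos_left hy' (by positivity)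
          _ = a' / 2 := by
              field_simp
          _ < a := by rw [ha'_def, ha_def]; linarith
      have hs := bohrCoeff_hasSum_complex ha0 ha1 hLy'
      rw [zero_add, hf_def]
      exact hs.congr_fun (fun m => hpconst m y)
  -- the point
  refine ⟨f, p, hdiff, hmaps, hps, (r₀ : ℂ) • x₀, ⟨x₀, hx₀G, rfl⟩, ?_⟩
  set t : ℝ := a' * r₀ * ‖x₀‖ / M with ht_def
  have hr₀0 : 0 < r₀ := by linarith
  have hLx : L ((r₀ : ℂ) • x₀) = (t : ℝ) := by
    rw [map_smul, smul_eq_mul, hL_def, ContinuousLinearMap.smul_apply, hgx', ht_def]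
    push_cast
    simp only [smul_eq_mul]
    first
    | ring
    | rfl
  have ht0 : 0 ≤ t := by
    rw [ht_def]
    positivity
  have hx₀M : ‖x₀‖ ≤ M := hMle x₀ hx₀G
  have hta' : t ≤ a' := by
    rw [ht_def, div_le_iff₀ hM0]
    have h4 : r₀ * ‖x₀‖ ≤ M := by
      nlinarith [mul_nonneg (show (0:ℝ) ≤ 1 - r₀ by linarith) (norm_nonneg x₀), hx₀M]
    nlinarith [mul_le_mul_of_nonneg_left h4 ha'0.le]
  have hta : t < a := lt_of_le_of_lt hta' ha'a
  have htlow : 1 / 3 + d / 2 ≤ t := by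
    have h1 : a' * r₀ * (a' * M) ≤ a' * r₀ * ‖x₀‖ := by
      nlinarith [mul_le_mul_of_nonneg_left hnx'.le (mul_pos ha'0 hr₀0).le]
    have h2 : a' * r₀ * (a' * M) / M ≤ t := by
      rw [ht_def]
      exact (div_le_div_iff_of_pos_right hM0).mpr h1
    have h3 : a' * r₀ * (a' * M) / M = a' * a' * r₀ := by field_simp
    rw [h3] at h2
    refine le_trans ?_ h2
    rw [ha'_def]
    nlinarith [sq_nonneg d, mul_nonneg (mul_nonneg hd0.le hd0.le) hr₀0.le,
      mul_nonneg (show (0:ℝ) ≤ 1 - d by linarith) (show (0:ℝ) ≤ r₀ - (1/3 + d) by linarith)]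
  have hnorm : ∀ m : ℕ, ‖p m fun _ => (r₀ : ℂ) • x₀‖ = bohrCoeff a m * t ^ m := by
    intro m
    rw [hpconst m _, hLx, norm_mul, norm_pow, Complex.norm_real, Complex.norm_real,
      Real.norm_eq_abs, Real.norm_eq_abs, abs_of_nonneg (bohrCoeff_nonneg ha0 ha1 m),
      abs_of_nonneg ht0]
  have hsum := bohrCoeff_hasSum_real ha0 ha1 ht0 hta
  have hsummable : Summable fun m : ℕ => ‖p m fun _ => (r₀ : ℂ) • x₀‖ :=
    hsum.summable.congr (fun m => (hnorm m).symm)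
  refine ⟨hsummable, ?_⟩
  have htsum : (∑' m : ℕ, ‖p m fun _ => (r₀ : ℂ) • x₀‖) = (1 - a * t) / (a - t) := by
    rw [tsum_congr hnorm]
    exact hsum.tsum_eq
  have hf0 : ‖f 0‖ = 1 / a := by
    rw [hf_def]
    simp only [map_zero, mul_zero, sub_zero]
    rw [norm_div]
    simp [Complex.norm_real, abs_of_pos ha0]
  rw [htsum, hf0]
  have := bohr_key_ineq hd0 hd1 htlow (by rw [← ha'_def]; exact hta')
  rw [← ha_def] at this
  exact this
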